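/- Let d ≥ 3, λ ∈ (d−3, d−1], c₀ > 0, and define m(t,r) = (2^{d−3−λ}/Γ((λ−d+3)/2)) c₀ t^{−(λ−d+3)/2} r^{λ+1} e^{−r²/(4t)} ∫₀¹ s^{d/2−1}(1−s)^{(λ−d+3)/2 −1} e^{(r²/(4t)) s} ds. Then for every y* > 0, ∫₀^{√t y*} m(t,r)/r^{d−1} dr ≤ (C c₀/(λ−d+3)) B(d/2, (λ−d+3)/2) y*^{λ−d+3}, uniformly in t > 0, where C = C(λ,d) = 2^{d−3−λ}/Γ((λ−d+3)/2) and B is the Euler Beta function; in particular sup_{t>0} ∫₀^{√t y*} m(t,r)/r^{d−1} dr < ∞. -/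

import Mathlib

open MeasureTheory


lemma integrableOn_betaIntegrand {a b : ℝ} (ha : 0 < a) (hb : 0 < b) :
    IntegrableOn (fun x : ℝ => x ^ (a - 1) * (1 - x) ^ (b - 1)) (Set.Ioo 0 1) := by
  have hc : IntervalIntegrable
      (fun x : ℝ => (x : ℂ) ^ ((a : ℂ) - 1) * ((1 : ℂ) - x) ^ ((b : ℂ) - 1))
      volume 0 1 :=
    Complex.betaIntegral_convergent (by simpa using ha) (by simpa using hb)
  have h1 : IntegrableOn
      (fun x : ℝ => ((x : ℂ) ^ ((a : ℂ) - 1) * ((1 : ℂ) - x) ^ ((b : ℂ) - 1)).re)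
      (Set.Ioc (0:ℝ) 1) := hc.1.re
  refine ((h1.mono_set Set.Ioo_subset_Ioc_self).congr_fun ?_ measurableSet_Ioo)
  intro x hx
  have hx0 : (0:ℝ) ≤ x := le_of_lt hx.1
  have hx1 : (0:ℝ) ≤ 1 - x := by linarith [hx.2]
  have e1 : ((x : ℂ)) ^ ((a : ℂ) - 1) = ((x ^ (a - 1) : ℝ) : ℂ) := by
    rw [Complex.ofReal_cpow hx0]; push_cast; ring_nf
  have e2 : ((1 : ℂ) - x) ^ ((b : ℂ) - 1) = (((1 - x) ^ (b - 1) : ℝ) : ℂ) := by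
    rw [Complex.ofReal_cpow hx1]; push_cast; ring_nf
  simp [e1, e2, ← Complex.ofReal_mul]

lemma real_betaIntegral {a b : ℝ} (ha : 0 < a) (hb : 0 < b) :
    ∫ x in Set.Ioo (0:ℝ) 1, x ^ (a - 1) * (1 - x) ^ (b - 1) =
      Real.Gamma a * Real.Gamma b / Real.Gamma (a + b) := by
  have h := Complex.Gamma_mul_Gamma_eq_betaIntegral
    (s := (a : ℂ)) (t := (b : ℂ)) (by simpa using ha) (by simpa using hb)
  have hbeta : Complex.betaIntegral a b =
      ((∫ x in (0:ℝ)..1, x ^ (a - 1) * (1 - x) ^ (b - 1) : ℝ) : ℂ) := by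
    rw [Complex.betaIntegral, ← intervalIntegral.integral_ofReal]
    refine intervalIntegral.integral_congr fun x hx => ?_
    rw [Set.uIcc_of_le zero_le_one] at hx
    have hx0 : (0:ℝ) ≤ x := hx.1
    have hx1 : (0:ℝ) ≤ 1 - x := by linarith [hx.2]
    rw [Complex.ofReal_mul, Complex.ofReal_cpow hx0, Complex.ofReal_cpow hx1]
    push_cast; ring_nf
  rw [hbeta, ← Complex.ofReal_add, Complex.Gamma_ofReal, Complex.Gamma_ofReal,
    Complex.Gamma_ofReal, ← Complex.ofReal_mul, ← Complex.ofReal_mul] at h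
  have h' := Complex.ofReal_injective h
  have hG : Real.Gamma (a + b) ≠ 0 :=
    (Real.Gamma_pos_of_pos (by linarith)).ne'
  rw [intervalIntegral.integral_of_le zero_le_one,
    MeasureTheory.integral_Ioc_eq_integral_Ioo] at h'
  field_simp
  linarith [h']

/-- The barrier function `m(t,r)` solving the Bessel-type problem with
initial datum `c₀ r^{d-2}`. -/
noncomputable def besselBarrier (d : ℕ) (lam c₀ : ℝ) (t r : ℝ) : ℝ :=
  ((2 : ℝ) ^ ((d : ℝ) - 3 - lam) / Real.Gamma ((lam - d + 3) / 2)) * c₀ *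
    t ^ (-(lam - (d : ℝ) + 3) / 2) * r ^ (lam + 1) * Real.exp (-r ^ 2 / (4 * t)) *
    ∫ s in Set.Ioo (0 : ℝ) 1,
      s ^ ((d : ℝ) / 2 - 1) * (1 - s) ^ ((lam - (d : ℝ) + 3) / 2 - 1) *
        Real.exp (r ^ 2 / (4 * t) * s)

/-- Uniform-in-time bound for the barrier function. -/
theorem besselBarrier_uniform_bound (d : ℕ) (hd : 3 ≤ d) (lam c₀ : ℝ)
    (hlam : (d : ℝ) - 3 < lam ∧ lam ≤ (d : ℝ) - 1) (hc₀ : 0 < c₀)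
    (ystar : ℝ) (hy : 0 < ystar) :
    (∀ t : ℝ, 0 < t →
      (∫ r in Set.Ioc (0 : ℝ) (Real.sqrt t * ystar),
          besselBarrier d lam c₀ t r / r ^ ((d : ℝ) - 1))
        ≤ ((2 : ℝ) ^ ((d : ℝ) - 3 - lam) / Real.Gamma ((lam - d + 3) / 2)) * c₀
            / (lam - d + 3) *
          (Real.Gamma ((d : ℝ) / 2) * Real.Gamma ((lam - (d : ℝ) + 3) / 2) /
            Real.Gamma ((d : ℝ) / 2 + (lam - (d : ℝ) + 3) / 2)) *
          ystar ^ (lam - (d : ℝ) + 3)) ∧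
    BddAbove {y : ℝ | ∃ t : ℝ, 0 < t ∧
      y = ∫ r in Set.Ioc (0 : ℝ) (Real.sqrt t * ystar),
        besselBarrier d lam c₀ t r / r ^ ((d : ℝ) - 1)} := by
  have hd3 : (3:ℝ) ≤ (d:ℝ) := by exact_mod_cast hd
  set c : ℝ := lam - (d:ℝ) + 3 with hc_def
  have hc : 0 < c := by simp only [hc_def]; linarith [hlam.1]
  have ha2 : (0:ℝ) < (d:ℝ)/2 := by linarith
  have hb2 : (0:ℝ) < c/2 := by linarith
  have hGb : 0 < Real.Gamma (c/2) := Real.Gamma_pos_of_pos hb2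
  set C : ℝ := (2 : ℝ) ^ ((d : ℝ) - 3 - lam) / Real.Gamma (c / 2) with hC_def
  have hC : 0 < C := by
    apply div_pos (Real.rpow_pos_of_pos two_pos _) hGb
  set Bval : ℝ := ∫ s in Set.Ioo (0:ℝ) 1,
      s ^ ((d:ℝ)/2 - 1) * (1 - s) ^ (c/2 - 1) with hB_def
  have hBint : IntegrableOn (fun s : ℝ => s ^ ((d:ℝ)/2 - 1) * (1 - s) ^ (c/2 - 1))
      (Set.Ioo 0 1) := integrableOn_betaIntegrand ha2 hb2
  have hBnn : 0 ≤ Bval := by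
    apply setIntegral_nonneg measurableSet_Ioo
    intro s hs
    exact mul_nonneg (Real.rpow_nonneg hs.1.le _)
      (Real.rpow_nonneg (by linarith [hs.2]) _)
  have hBval : Bval = Real.Gamma ((d:ℝ)/2) * Real.Gamma (c/2) /
      Real.Gamma ((d:ℝ)/2 + c/2) := real_betaIntegral ha2 hb2
  have key : ∀ t : ℝ, 0 < t →
      (∫ r in Set.Ioc (0 : ℝ) (Real.sqrt t * ystar),
          besselBarrier d lam c₀ t r / r ^ ((d : ℝ) - 1))
        ≤ C * c₀ / c *
          (Real.Gamma ((d : ℝ) / 2) * Real.Gamma (c / 2) /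
            Real.Gamma ((d : ℝ) / 2 + c / 2)) * ystar ^ c := by
    intro t ht
    set L : ℝ := Real.sqrt t * ystar with hL_def
    have hL : 0 < L := mul_pos (Real.sqrt_pos.2 ht) hy
    -- inner integral bound
    have hI : ∀ r : ℝ, (∫ s in Set.Ioo (0:ℝ) 1,
        s ^ ((d:ℝ)/2 - 1) * (1 - s) ^ (c/2 - 1) * Real.exp (r ^ 2 / (4 * t) * s))
        ≤ Real.exp (r ^ 2 / (4 * t)) * Bval := by
      intro r
      set X : ℝ := r ^ 2 / (4 * t) with hX_def
      have hX : 0 ≤ X := by positivity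
      have hg_int : IntegrableOn
          (fun s : ℝ => Real.exp X * (s ^ ((d:ℝ)/2 - 1) * (1 - s) ^ (c/2 - 1)))
          (Set.Ioo 0 1) := hBint.const_mul _
      have hmeas : AEStronglyMeasurable
          (fun s : ℝ => s ^ ((d:ℝ)/2 - 1) * (1 - s) ^ (c/2 - 1) * Real.exp (X * s))
          (volume.restrict (Set.Ioo 0 1)) := by
        apply Measurable.aestronglyMeasurable
        fun_prop
      have hf_int : IntegrableOn
          (fun s : ℝ => s ^ ((d:ℝ)/2 - 1) * (1 - s) ^ (c/2 - 1) * Real.exp (X * s))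
          (Set.Ioo 0 1) := by
        refine hg_int.mono' hmeas ?_
        filter_upwards [ae_restrict_mem measurableSet_Ioo] with s hs
        have h1 : (0:ℝ) ≤ s ^ ((d:ℝ)/2 - 1) := Real.rpow_nonneg hs.1.le _
        have h2 : (0:ℝ) ≤ (1 - s) ^ (c/2 - 1) := Real.rpow_nonneg (by linarith [hs.2]) _
        rw [Real.norm_eq_abs, abs_of_nonneg (by positivity)]
        rw [mul_comm (Real.exp X)]
        apply mul_le_mul_of_nonneg_left _ (mul_nonneg h1 h2)
        apply Real.exp_le_exp.2
        nlinarith [hs.2, hX]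
      have := setIntegral_mono_on hf_int hg_int measurableSet_Ioo ?_
      · rwa [integral_const_mul] at this
      · intro s hs
        have h1 : (0:ℝ) ≤ s ^ ((d:ℝ)/2 - 1) := Real.rpow_nonneg hs.1.le _
        have h2 : (0:ℝ) ≤ (1 - s) ^ (c/2 - 1) := Real.rpow_nonneg (by linarith [hs.2]) _
        rw [mul_comm (Real.exp X)]
        apply mul_le_mul_of_nonneg_left _ (mul_nonneg h1 h2)
        apply Real.exp_le_exp.2
        nlinarith [hs.2, hX]
    -- pointwise bound on (0, L]
    set K : ℝ := C * c₀ * t ^ (-c / 2) * Bval with hK_def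
    have hKnn : 0 ≤ K := by positivity
    have hpt : ∀ r ∈ Set.Ioc (0:ℝ) L,
        besselBarrier d lam c₀ t r / r ^ ((d:ℝ) - 1) ≤ K * r ^ (lam + 2 - d) := by
      intro r hr
      have hr0 : 0 < r := hr.1
      have hrw : besselBarrier d lam c₀ t r / r ^ ((d:ℝ) - 1)
          = (C * c₀ * t ^ (-c / 2)) * (r ^ (lam + 1) / r ^ ((d:ℝ) - 1)) *
            (Real.exp (-(r ^ 2 / (4 * t))) *
              ∫ s in Set.Ioo (0:ℝ) 1,
                s ^ ((d:ℝ)/2 - 1) * (1 - s) ^ (c/2 - 1) * Real.exp (r ^ 2 / (4 * t) * s)) := by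
        rw [hc_def, besselBarrier, neg_div]
        generalize (∫ s in Set.Ioo (0:ℝ) 1,
          s ^ ((d:ℝ)/2 - 1) * (1 - s) ^ ((lam - (d:ℝ) + 3)/2 - 1) *
            Real.exp (r ^ 2 / (4 * t) * s)) = I
        rw [hC_def, hc_def]
        ring
      have hr1 : r ^ (lam + 1) / r ^ ((d:ℝ) - 1) = r ^ (lam + 2 - (d:ℝ)) := by
        rw [← Real.rpow_sub hr0,
          show lam + 1 - ((d:ℝ) - 1) = lam + 2 - (d:ℝ) from by ring]
      have h2 : Real.exp (-(r ^ 2 / (4 * t))) *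
          (∫ s in Set.Ioo (0:ℝ) 1,
            s ^ ((d:ℝ)/2 - 1) * (1 - s) ^ (c/2 - 1) * Real.exp (r ^ 2 / (4 * t) * s))
          ≤ Bval := by
        have := mul_le_mul_of_nonneg_left (hI r) (Real.exp_nonneg (-(r ^ 2 / (4 * t))))
        rwa [← mul_assoc, ← Real.exp_add, neg_add_cancel, Real.exp_zero, one_mul] at this
      calc besselBarrier d lam c₀ t r / r ^ ((d:ℝ) - 1)
          = (C * c₀ * t ^ (-c / 2)) * r ^ (lam + 2 - (d:ℝ)) *
            (Real.exp (-(r ^ 2 / (4 * t))) *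
              ∫ s in Set.Ioo (0:ℝ) 1,
                s ^ ((d:ℝ)/2 - 1) * (1 - s) ^ (c/2 - 1) * Real.exp (r ^ 2 / (4 * t) * s)) := by
            rw [hrw, hr1]
        _ ≤ (C * c₀ * t ^ (-c / 2)) * r ^ (lam + 2 - (d:ℝ)) * Bval := by
            apply mul_le_mul_of_nonneg_left h2 (by positivity)
        _ = K * r ^ (lam + 2 - d) := by rw [hK_def]; ring
    -- integrability of majorant
    have hexp : -1 < lam + 2 - (d:ℝ) := by linarith [hlam.1]
    have hmaj_int : IntegrableOn (fun r : ℝ => K * r ^ (lam + 2 - (d:ℝ)))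
        (Set.Ioc 0 L) := ((intervalIntegral.intervalIntegrable_rpow' hexp).1).const_mul _
    -- nonnegativity of the integrand
    have hnn : ∀ r ∈ Set.Ioc (0:ℝ) L,
        0 ≤ besselBarrier d lam c₀ t r / r ^ ((d:ℝ) - 1) := by
      intro r hr
      have hr0 : 0 < r := hr.1
      have hInn : 0 ≤ ∫ s in Set.Ioo (0:ℝ) 1,
          s ^ ((d:ℝ)/2 - 1) * (1 - s) ^ (c/2 - 1) * Real.exp (r ^ 2 / (4 * t) * s) := by
        apply setIntegral_nonneg measurableSet_Ioo
        intro s hs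
        have h1 : (0:ℝ) ≤ s ^ ((d:ℝ)/2 - 1) := Real.rpow_nonneg hs.1.le _
        have h2 : (0:ℝ) ≤ (1 - s) ^ (c/2 - 1) := Real.rpow_nonneg (by linarith [hs.2]) _
        positivity
      rw [besselBarrier]
      have hCnn := hC.le
      positivity
    -- main comparison
    have hmono : (∫ r in Set.Ioc (0 : ℝ) L, besselBarrier d lam c₀ t r / r ^ ((d:ℝ) - 1))
        ≤ ∫ r in Set.Ioc (0 : ℝ) L, K * r ^ (lam + 2 - (d:ℝ)) := by
      apply integral_mono_of_nonneg
      · filter_upwards [ae_restrict_mem measurableSet_Ioc] with r hr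
        exact hnn r hr
      · exact hmaj_int
      · filter_upwards [ae_restrict_mem measurableSet_Ioc] with r hr
        exact hpt r hr
    -- compute the majorant integral
    have hval : (∫ r in Set.Ioc (0 : ℝ) L, K * r ^ (lam + 2 - (d:ℝ)))
        = K * (L ^ c / c) := by
      rw [integral_const_mul, ← intervalIntegral.integral_of_le hL.le,
        integral_rpow (Or.inl hexp)]
      rw [show lam + 2 - (d:ℝ) + 1 = c from by rw [hc_def]; ring]
      rw [Real.zero_rpow hc.ne']
      ring
    have hLpow : L ^ c = t ^ (c/2) * ystar ^ c := by
      rw [hL_def, Real.mul_rpow (Real.sqrt_nonneg t) hy.le,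
        Real.sqrt_eq_rpow, ← Real.rpow_mul ht.le]
      ring_nf
    have ht1 : t ^ (-c/2) * t ^ (c/2) = 1 := by
      rw [← Real.rpow_add ht, show -c/2 + c/2 = (0:ℝ) from by ring, Real.rpow_zero]
    calc (∫ r in Set.Ioc (0 : ℝ) L, besselBarrier d lam c₀ t r / r ^ ((d:ℝ) - 1))
        ≤ K * (L ^ c / c) := hmono.trans_eq hval
      _ = C * c₀ / c * Bval * ystar ^ c * (t ^ (-c/2) * t ^ (c/2)) := by
          rw [hK_def, hLpow]; ring
      _ = C * c₀ / c *
          (Real.Gamma ((d : ℝ) / 2) * Real.Gamma (c / 2) /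
            Real.Gamma ((d : ℝ) / 2 + c / 2)) * ystar ^ c := by
          rw [ht1, hBval]; ring
  constructor
  · intro t ht
    exact key t ht
  · refine ⟨C * c₀ / c *
      (Real.Gamma ((d : ℝ) / 2) * Real.Gamma (c / 2) /
        Real.Gamma ((d : ℝ) / 2 + c / 2)) * ystar ^ c, ?_⟩
    rintro y ⟨t, ht, rfl⟩
    exact key t ht
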